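/- arXiv:1405.4267 — 3 statements merged into one kernel-verified Lean document; each statement's English description precedes it below -/
import Mathlib

section
/- Let X be a pointed compact metric space (with base point 0) and φ : X → X a continuous map that is not supercontractive. Then there exist ε > 0, sequences (xₙ), (yₙ) in X converging to a common point x₀ ∈ X with 0 < d(xₙ, yₙ) < 1/n and d(φ(xₙ), φ(yₙ))/d(xₙ, yₙ) > ε for all n, and a Lipschitz function f : X → ℝ with f(0) = 0 such that f(φ(xₙ)) = d(φ(xₙ), φ(yₙ)) and f(φ(yₙ)) = 0 for all n. -/
open Filter
open Topology

/-- A map between metric spaces is supercontractive if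
`lim_{d(x,y)→0} d(f x, f y)/d(x,y) = 0`. -/
def IsSupercontractive {X Y : Type*} [MetricSpace X] [MetricSpace Y] (f : X → Y) : Prop :=
  ∀ ε > (0 : ℝ), ∃ δ > (0 : ℝ), ∀ x y : X,
    0 < dist x y → dist x y < δ → dist (f x) (f y) / dist x y < ε

/-- Auxiliary: construct the Lipschitz function from a well-separated configuration. -/
theorem aux_lipschitz {X : Type*} [MetricSpace X] (e p : X) (A B : ℕ → X) (D : ℕ → ℝ)
    (hD : ∀ n, D n = dist (A n) (B n)) (hDpos : ∀ n, 0 < D n)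
    (hanti : ∀ j k, j ≤ k → D k ≤ D j)
    (hC1 : ∀ n, D n / 2 ≤ dist (A n) p)
    (hC2 : ∀ j k, j < k → dist (A k) p ≤ D j / 4 ∧ dist (B k) p ≤ D j / 4)
    (hC3 : ∀ j k, j < k → D k / 4 ≤ dist (A j) (A k) ∧ D k / 4 ≤ dist (B j) (A k))
    (hCe : ∀ k, D k / 4 ≤ dist e (A k)) :
    ∃ f : X → ℝ, (∃ K, LipschitzWith K f) ∧ f e = 0 ∧
      ∀ n : ℕ, f (A n) = D n ∧ f (B n) = 0 := by
  set F : X → ℝ := fun z => ⨆ k : ℕ, max 0 (D k - 4 * dist z (A k)) with hF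
  have hbdd : ∀ z : X, BddAbove (Set.range fun k : ℕ => max 0 (D k - 4 * dist z (A k))) := by
    intro z
    refine ⟨D 0, ?_⟩
    rintro r ⟨k, rfl⟩
    have h1 : D k ≤ D 0 := hanti 0 k (Nat.zero_le k)
    have h2 := hDpos 0
    have h3 : (0:ℝ) ≤ dist z (A k) := dist_nonneg
    apply max_le
    · linarith [hDpos 0]
    · linarith
  have key2 : ∀ z w : X, F z ≤ F w + 4 * dist z w := by
    intro z w
    refine ciSup_le fun k => ?_
    have hterm : max 0 (D k - 4 * dist z (A k)) ≤ max 0 (D k - 4 * dist w (A k)) + 4 * dist z w := by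
      have t := dist_triangle w z (A k)
      have hcomm : dist w z = dist z w := dist_comm w z
      have h0 : (0:ℝ) ≤ 4 * dist z w := by positivity
      apply max_le
      · have := le_max_left (0:ℝ) (D k - 4 * dist w (A k)); linarith
      · have := le_max_right (0:ℝ) (D k - 4 * dist w (A k)); linarith
    refine hterm.trans ?_
    have := le_ciSup (hbdd w) k
    linarith
  have hlip : LipschitzWith 4 F := by
    apply LipschitzWith.of_dist_le_mul
    intro z w
    rw [Real.dist_eq, abs_sub_le_iff]
    constructor
    · have := key2 z w; push_cast; linarith
    · have := key2 w z; have h := dist_comm w z; push_cast; linarith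
  have hzero : ∀ (z : X), (∀ k : ℕ, D k ≤ 4 * dist z (A k)) → F z = 0 := by
    intro z hz
    have : (fun k : ℕ => max 0 (D k - 4 * dist z (A k))) = fun _ => (0:ℝ) := by
      funext k
      exact max_eq_left (by linarith [hz k])
    rw [hF]
    simp only [this]
    exact ciSup_const
  refine ⟨F, ⟨4, hlip⟩, ?_, fun n => ⟨?_, ?_⟩⟩
  · exact hzero e fun k => by linarith [hCe k]
  · -- F (A n) = D n
    refine le_antisymm (ciSup_le fun k => ?_) ?_
    · rcases lt_trichotomy k n with hk | rfl | hk
      · have h1 := (hC2 k n hk).1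
        have h2 := hC1 k
        have t := dist_triangle (A k) (A n) p
        have hcomm : dist (A n) (A k) = dist (A k) (A n) := dist_comm _ _
        apply max_le (hDpos n).le
        linarith [hDpos n]
      · apply max_le (hDpos _).le
        simp [dist_self]
      · have h1 := (hC3 n k hk).1
        apply max_le (hDpos n).le
        linarith [hDpos n]
    · have := le_ciSup (hbdd (A n)) n
      rw [dist_self, mul_zero, sub_zero, max_eq_right (hDpos n).le] at this
      exact this
  · -- F (B n) = 0
    refine hzero (B n) fun k => ?_
    rcases lt_trichotomy k n with hk | rfl | hk
    · have h1 := (hC2 k n hk).2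
      have h2 := hC1 k
      have t := dist_triangle (A k) (B n) p
      have hcomm : dist (B n) (A k) = dist (A k) (B n) := dist_comm _ _
      linarith
    · have : dist (B k) (A k) = D k := by rw [hD k, dist_comm]
      linarith [hDpos k]
    · linarith [(hC3 n k hk).2]

/-- Lemma 1 of the paper: for a continuous non-supercontractive self-map `φ` of a pointed compact
metric space (base point `e`), there are `ε > 0`, sequences `(xₙ)`, `(yₙ)` converging to a common
point with `0 < d(xₙ,yₙ) < 1/n` and `d(φ xₙ, φ yₙ)/d(xₙ,yₙ) > ε`, and a Lipschitz function `f`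
vanishing at `e` with `f (φ xₙ) = d(φ xₙ, φ yₙ)` and `f (φ yₙ) = 0` for all `n`. -/
theorem exists_sequences_and_function_of_not_supercontractive {X : Type*} [MetricSpace X]
    [CompactSpace X] (e : X) (φ : X → X) (hφ : Continuous φ) (h : ¬ IsSupercontractive φ) :
    ∃ ε > (0 : ℝ), ∃ x₀ : X, ∃ x y : ℕ → X,
      Tendsto x atTop (nhds x₀) ∧ Tendsto y atTop (nhds x₀) ∧
      (∀ n : ℕ, 0 < dist (x n) (y n) ∧ dist (x n) (y n) < 1 / (n + 1) ∧
        ε < dist (φ (x n)) (φ (y n)) / dist (x n) (y n)) ∧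
      ∃ f : X → ℝ, (∃ K, LipschitzWith K f) ∧ f e = 0 ∧
        ∀ n : ℕ, f (φ (x n)) = dist (φ (x n)) (φ (y n)) ∧ f (φ (y n)) = 0 := by
  classical
  rw [IsSupercontractive] at h
  push_neg at h
  obtain ⟨ε₀, hε₀, hh⟩ := h
  have hseq : ∀ n : ℕ, ∃ a b : X, 0 < dist a b ∧ dist a b < 1 / (n + 1) ∧
      ε₀ ≤ dist (φ a) (φ b) / dist a b := by
    intro n
    obtain ⟨a, b, h1, h2, h3⟩ := hh (1 / (n + 1)) (by positivity)
    exact ⟨a, b, h1, h2, h3⟩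
  choose u v hd hlt hra using hseq
  obtain ⟨x₀, -, σ, hσ, hulim⟩ := isCompact_univ.tendsto_subseq (x := u) (fun n => Set.mem_univ _)
  set p := φ x₀ with hp
  -- basic convergence facts
  have hcast : ∀ m n : ℕ, m ≤ n → (1:ℝ) / (n + 1) ≤ 1 / (m + 1) := by
    intro m n hmn
    apply one_div_le_one_div_of_le (by positivity)
    have : (m:ℝ) ≤ n := Nat.cast_le.2 hmn
    linarith
  have h1n0 : Tendsto (fun n : ℕ => (1:ℝ) / (n + 1)) atTop (𝓝 0) :=
    tendsto_one_div_add_atTop_nhds_zero_nat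
  have hduv : ∀ n, dist (u (σ n)) (v (σ n)) < 1 / (n + 1) :=
    fun n => lt_of_lt_of_le (hlt (σ n)) (hcast n (σ n) (hσ.le_apply))
  have hduv0 : Tendsto (fun n => dist (u (σ n)) (v (σ n))) atTop (𝓝 0) :=
    squeeze_zero (fun n => dist_nonneg) (fun n => (hduv n).le) h1n0
  have hulim' : Tendsto (fun n => dist (u (σ n)) x₀) atTop (𝓝 0) :=
    tendsto_iff_dist_tendsto_zero.1 hulim
  -- swap so that φ of the first point is the farther from p
  set U : ℕ → X := fun n =>
    if dist (φ (v (σ n))) p ≤ dist (φ (u (σ n))) p then u (σ n) else v (σ n) with hU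
  set V : ℕ → X := fun n =>
    if dist (φ (v (σ n))) p ≤ dist (φ (u (σ n))) p then v (σ n) else u (σ n) with hV
  have hUV1 : ∀ n, dist (U n) (V n) = dist (u (σ n)) (v (σ n)) := by
    intro n
    simp only [hU, hV]
    split_ifs with hc
    · rfl
    · exact dist_comm _ _
  have hUV2 : ∀ n, dist (φ (U n)) (φ (V n)) = dist (φ (u (σ n))) (φ (v (σ n))) := by
    intro n
    simp only [hU, hV]
    split_ifs with hc
    · rfl
    · exact dist_comm _ _
  have hswap : ∀ n, dist (φ (V n)) p ≤ dist (φ (U n)) p := by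
    intro n
    simp only [hU, hV]
    split_ifs with hc
    · exact hc
    · exact (not_le.1 hc).le
  set A' : ℕ → X := fun n => φ (U n) with hA'
  set B' : ℕ → X := fun n => φ (V n) with hB'
  set D' : ℕ → ℝ := fun n => dist (A' n) (B' n) with hD'
  have hC1 : ∀ n, D' n / 2 ≤ dist (A' n) p := by
    intro n
    have t := dist_triangle (A' n) p (B' n)
    have h2 := hswap n
    have hc : dist p (B' n) = dist (B' n) p := dist_comm _ _
    simp only [hD']
    linarith
  have hD'pos : ∀ n, 0 < D' n := by
    intro n
    have h1 := hra (σ n)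
    have h2 := hd (σ n)
    have h3 : 0 < dist (φ (u (σ n))) (φ (v (σ n))) := by
      by_contra hcon
      push_neg at hcon
      have : dist (φ (u (σ n))) (φ (v (σ n))) = 0 := le_antisymm hcon dist_nonneg
      rw [this] at h1
      rw [zero_div] at h1
      linarith
    simp only [hD', hUV2 n]
    rw [show dist (A' n) (B' n) = _ from hUV2 n]; exact h3
  have hUlim : Tendsto U atTop (𝓝 x₀) := by
    rw [tendsto_iff_dist_tendsto_zero]
    apply squeeze_zero (fun n => dist_nonneg)
      (g := fun n => dist (u (σ n)) x₀ + dist (u (σ n)) (v (σ n)))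
    · intro n
      by_cases hc : dist (φ (v (σ n))) p ≤ dist (φ (u (σ n))) p
      · simp only [hU, if_pos hc]
        linarith [dist_nonneg (x := u (σ n)) (y := v (σ n))]
      · simp only [hU, if_neg hc]
        have t := dist_triangle (v (σ n)) (u (σ n)) x₀
        have hcm : dist (v (σ n)) (u (σ n)) = dist (u (σ n)) (v (σ n)) := dist_comm _ _
        linarith
    · simpa using hulim'.add hduv0
  have hVlim : Tendsto V atTop (𝓝 x₀) := by
    rw [tendsto_iff_dist_tendsto_zero]
    apply squeeze_zero (fun n => dist_nonneg)
      (g := fun n => dist (u (σ n)) x₀ + dist (u (σ n)) (v (σ n)))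
    · intro n
      by_cases hc : dist (φ (v (σ n))) p ≤ dist (φ (u (σ n))) p
      · simp only [hV, if_pos hc]
        have t := dist_triangle (v (σ n)) (u (σ n)) x₀
        have hcm : dist (v (σ n)) (u (σ n)) = dist (u (σ n)) (v (σ n)) := dist_comm _ _
        linarith
      · simp only [hV, if_neg hc]
        linarith [dist_nonneg (x := u (σ n)) (y := v (σ n))]
    · simpa using hulim'.add hduv0
  have hA'lim : Tendsto A' atTop (𝓝 p) := (hφ.tendsto x₀).comp hUlim
  have hB'lim : Tendsto B' atTop (𝓝 p) := (hφ.tendsto x₀).comp hVlim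
  have hApt : Tendsto (fun m => dist (A' m) p) atTop (𝓝 0) :=
    tendsto_iff_dist_tendsto_zero.1 hA'lim
  have hBpt : Tendsto (fun m => dist (B' m) p) atTop (𝓝 0) :=
    tendsto_iff_dist_tendsto_zero.1 hB'lim
  have hD'0 : Tendsto D' atTop (𝓝 0) := by
    apply squeeze_zero (fun n => dist_nonneg)
      (g := fun n => dist (A' n) p + dist (B' n) p)
    · intro n
      have t := dist_triangle (A' n) p (B' n)
      have hc : dist p (B' n) = dist (B' n) p := dist_comm _ _
      have he : D' n = dist (A' n) (B' n) := rfl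
      linarith
    · simpa using hApt.add hBpt
  -- eventual separation from a finite list of points
  have hstep : ∀ l : List X, ∀ᶠ m in atTop, ∀ q ∈ l, D' m / 4 ≤ dist q (A' m) := by
    intro l
    induction l with
    | nil => simp
    | cons q l ih =>
      have hq : ∀ᶠ m in atTop, D' m / 4 ≤ dist q (A' m) := by
        by_cases hqp : q = p
        · subst hqp
          refine Eventually.of_forall fun m => ?_
          have h1 := hC1 m
          have hc : dist p (A' m) = dist (A' m) p := dist_comm _ _
          linarith [(hD'pos m).le]
        · have hlim : Tendsto (fun m => dist q (A' m)) atTop (𝓝 (dist q p)) :=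
            tendsto_const_nhds.dist hA'lim
          have h4 : Tendsto (fun m => D' m / 4) atTop (𝓝 0) := by
            simpa using hD'0.div_const 4
          have := h4.eventually_lt hlim (dist_pos.2 hqp)
          exact this.mono fun m hm => hm.le
      filter_upwards [hq, ih] with m h1 h2
      intro r hr
      rcases List.mem_cons.1 hr with rfl | hr'
      · exact h1
      · exact h2 r hr'
  have key : ∀ (t : ℕ) (l : List X), ∃ m, t < m ∧ dist (A' m) p ≤ D' t / 4 ∧
      dist (B' m) p ≤ D' t / 4 ∧ ∀ q ∈ l, D' m / 4 ≤ dist q (A' m) := by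
    intro t l
    have hc : (0:ℝ) < D' t / 4 := by linarith [hD'pos t]
    have e1 := hApt.eventually_le_const hc
    have e2 := hBpt.eventually_le_const hc
    obtain ⟨m, hm1, hm2, hm3, hm4⟩ :=
      ((eventually_gt_atTop t).and (e1.and (e2.and (hstep l)))).exists
    exact ⟨m, hm1, hm2, hm3, hm4⟩
  choose nxt hn1 hn2 hn3 hn4 using key
  set stepf : ℕ × List X → ℕ × List X :=
    fun s => (nxt s.1 s.2, A' (nxt s.1 s.2) :: B' (nxt s.1 s.2) :: s.2) with hstepf
  set st : ℕ → ℕ × List X := fun k => stepf^[k] (0, [e]) with hst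
  have hstsucc : ∀ k, st (k + 1) = stepf (st k) := by
    intro k
    simp only [hst, Function.iterate_succ_apply']
  set τ : ℕ → ℕ := fun k => (st (k + 1)).1 with hτdef
  have hτ : ∀ k, τ k = nxt (st k).1 (st k).2 := by
    intro k
    simp only [hτdef, hstsucc k, hstepf]
  have hL : ∀ k, (st (k + 1)).2 = A' (τ k) :: B' (τ k) :: (st k).2 := by
    intro k
    simp only [hτdef, hstsucc k, hstepf]
  have hmono' : ∀ k, (st k).1 < (st (k + 1)).1 := by
    intro k
    rw [hstsucc k]
    exact hn1 (st k).1 (st k).2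
  have hτmono : StrictMono τ := by
    apply strictMono_nat_of_lt_succ
    intro k
    exact hmono' (k + 1)
  have he_mem : ∀ k, e ∈ (st k).2 := by
    intro k
    induction k with
    | zero => simp [hst]
    | succ k ih => rw [hL k]; exact List.mem_cons_of_mem _ (List.mem_cons_of_mem _ ih)
  have hAB_mem : ∀ j k, j ≤ k → A' (τ j) ∈ (st (k + 1)).2 ∧ B' (τ j) ∈ (st (k + 1)).2 := by
    intro j k hjk
    induction k with
    | zero =>
      have hj0 : j = 0 := Nat.le_zero.1 hjk
      subst hj0
      rw [hL 0]
      exact ⟨List.mem_cons_self, List.mem_cons_of_mem _ (List.mem_cons_self)⟩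
    | succ k ih =>
      rcases eq_or_lt_of_le hjk with hj | hj
      · subst hj
        rw [hL (k + 1)]
        exact ⟨List.mem_cons_self, List.mem_cons_of_mem _ (List.mem_cons_self)⟩
      · have hm := ih (Nat.lt_succ_iff.1 hj)
        rw [hL (k + 1)]
        exact ⟨List.mem_cons_of_mem _ (List.mem_cons_of_mem _ hm.1),
          List.mem_cons_of_mem _ (List.mem_cons_of_mem _ hm.2)⟩
  have hnear : ∀ k, dist (A' (τ k)) p ≤ D' ((st k).1) / 4 ∧
      dist (B' (τ k)) p ≤ D' ((st k).1) / 4 := by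
    intro k
    rw [hτ k]
    exact ⟨hn2 _ _, hn3 _ _⟩
  have hfar : ∀ k, ∀ q ∈ (st k).2, D' (τ k) / 4 ≤ dist q (A' (τ k)) := by
    intro k q hq
    have := hn4 (st k).1 (st k).2 q hq
    rwa [← hτ k] at this
  have hst1 : ∀ k, (st (k + 1)).1 = τ k := fun k => rfl
  have hhalf : ∀ k, D' (τ (k + 1)) ≤ D' (τ k) / 2 := by
    intro k
    have h1 := (hnear (k + 1)).1
    have h2 := (hnear (k + 1)).2
    rw [hst1 k] at h1 h2
    have t := dist_triangle (A' (τ (k + 1))) p (B' (τ (k + 1)))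
    have hc : dist p (B' (τ (k + 1))) = dist (B' (τ (k + 1))) p := dist_comm _ _
    simp only [hD'] at *
    linarith
  have hanti : ∀ j k, j ≤ k → D' (τ k) ≤ D' (τ j) := by
    have : Antitone fun k => D' (τ k) :=
      antitone_nat_of_succ_le fun n => le_trans (hhalf n) (by linarith [hD'pos (τ n)])
    exact fun j k hjk => this hjk
  have hC2 : ∀ j k, j < k → dist (A' (τ k)) p ≤ D' (τ j) / 4 ∧
      dist (B' (τ k)) p ≤ D' (τ j) / 4 := by
    intro j k hjk
    obtain ⟨k, rfl⟩ : ∃ k', k = k' + 1 := ⟨k - 1, by omega⟩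
    have h := hnear (k + 1)
    rw [hst1 k] at h
    have hj : D' (τ k) ≤ D' (τ j) := hanti j k (by omega)
    exact ⟨le_trans h.1 (by linarith), le_trans h.2 (by linarith)⟩
  have hC3 : ∀ j k, j < k → D' (τ k) / 4 ≤ dist (A' (τ j)) (A' (τ k)) ∧
      D' (τ k) / 4 ≤ dist (B' (τ j)) (A' (τ k)) := by
    intro j k hjk
    obtain ⟨k, rfl⟩ : ∃ k', k = k' + 1 := ⟨k - 1, by omega⟩
    have hm := hAB_mem j k (by omega)
    exact ⟨hfar (k + 1) _ hm.1, hfar (k + 1) _ hm.2⟩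
  have hCe : ∀ k, D' (τ k) / 4 ≤ dist e (A' (τ k)) := fun k => hfar k e (he_mem k)
  -- assemble
  obtain ⟨f, hfK, hfe, hfAB⟩ := aux_lipschitz e p (fun n => A' (τ n)) (fun n => B' (τ n))
    (fun n => D' (τ n)) (fun n => rfl) (fun n => hD'pos (τ n)) (fun j k hjk => hanti j k hjk)
    (fun n => hC1 (τ n)) hC2 hC3 hCe
  refine ⟨ε₀ / 2, by linarith, x₀, fun n => U (τ n), fun n => V (τ n), ?_, ?_, ?_, ?_⟩
  · exact hUlim.comp hτmono.tendsto_atTop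
  · exact hVlim.comp hτmono.tendsto_atTop
  · intro n
    refine ⟨?_, ?_, ?_⟩
    · rw [hUV1 (τ n)]; exact hd _
    · rw [hUV1 (τ n)]
      exact lt_of_lt_of_le (hduv (τ n)) (hcast n (τ n) (hτmono.le_apply))
    · have h1 := hra (σ (τ n))
      rw [← hUV1 (τ n), ← hUV2 (τ n)] at h1
      linarith
  · refine ⟨f, hfK, hfe, fun n => ?_⟩
    exact hfAB n
end

section
/- Let X be a metric space, (aₙ) a sequence in X, (rₙ) a sequence of positive reals such that the open balls B(aₙ, rₙ) are pairwise disjoint, and (cₙ) a sequence of reals with 0 ≤ cₙ ≤ 4rₙ. Then the function g(x) = Σₙ cₙ · max{0, 1 - d(x, aₙ)/rₙ} is well defined (at each x at most one summand is nonzero), Lipschitz with constant at most 4, satisfies g(aₙ) = cₙ for all n, and g(x) = 0 for x outside the union of the balls B(aₙ, rₙ). -/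
/-- Sums of tent functions supported on pairwise disjoint balls `B(aₙ, rₙ)`, with heights
`0 ≤ cₙ ≤ 4 rₙ`: the resulting function `g` has at most one nonzero summand at each point,
is Lipschitz with constant `4`, satisfies `g (aₙ) = cₙ`, and vanishes outside the balls. -/
theorem sum_of_tents_on_disjoint_balls {X : Type*} [MetricSpace X] (a : ℕ → X) (r : ℕ → ℝ)
    (hr : ∀ n, 0 < r n)
    (hdisj : Pairwise fun m n => Disjoint (Metric.ball (a m) (r m)) (Metric.ball (a n) (r n)))
    (c : ℕ → ℝ) (hc : ∀ n, 0 ≤ c n ∧ c n ≤ 4 * r n) :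
    (∀ x : X, {n : ℕ | c n * max 0 (1 - dist x (a n) / r n) ≠ 0}.Subsingleton) ∧
    (∀ x y : X, |(∑' n, c n * max 0 (1 - dist x (a n) / r n)) -
        (∑' n, c n * max 0 (1 - dist y (a n) / r n))| ≤ 4 * dist x y) ∧
    (∀ m : ℕ, (∑' n, c n * max 0 (1 - dist (a m) (a n) / r n)) = c m) ∧
    (∀ x : X, x ∉ (⋃ n, Metric.ball (a n) (r n)) →
      (∑' n, c n * max 0 (1 - dist x (a n) / r n)) = 0) := by
  set f : ℕ → X → ℝ := fun n x => c n * max 0 (1 - dist x (a n) / r n) with hf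
  have hnonneg : ∀ n x, 0 ≤ f n x := fun n x => mul_nonneg (hc n).1 (le_max_left _ _)
  have hzero : ∀ n x, x ∉ Metric.ball (a n) (r n) → f n x = 0 := by
    intro n x hx
    simp only [Metric.mem_ball, not_lt] at hx
    have h1 : (1 : ℝ) ≤ dist x (a n) / r n := (one_le_div (hr n)).2 hx
    have h2 : max 0 (1 - dist x (a n) / r n) = 0 := max_eq_left (by linarith)
    simp [hf, h2]
  have hmem : ∀ n x, f n x ≠ 0 → x ∈ Metric.ball (a n) (r n) := by
    intro n x h
    by_contra hx
    exact h (hzero n x hx)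
  have hss : ∀ x : X, {n : ℕ | f n x ≠ 0}.Subsingleton := by
    intro x m hm n hn
    by_contra hmn
    exact Set.disjoint_left.1 (hdisj hmn) (hmem m x hm) (hmem n x hn)
  have hlip : ∀ n x y, f n x - f n y ≤ 4 * dist x y := by
    intro n x y
    have habs : |dist y (a n) - dist x (a n)| ≤ dist x y := by
      rw [abs_sub_comm]; exact abs_dist_sub_le x y (a n)
    have key : max 0 (1 - dist x (a n) / r n) - max 0 (1 - dist y (a n) / r n)
        ≤ dist x y / r n := by
      have h1 : |max (1 - dist x (a n) / r n) 0 - max (1 - dist y (a n) / r n) 0|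
          ≤ |(1 - dist x (a n) / r n) - (1 - dist y (a n) / r n)| :=
        abs_max_sub_max_le_abs _ _ _
      have h2 : (1 - dist x (a n) / r n) - (1 - dist y (a n) / r n)
          = (dist y (a n) - dist x (a n)) / r n := by ring
      have h3 : |(dist y (a n) - dist x (a n)) / r n|
          = |dist y (a n) - dist x (a n)| / r n := by
        rw [abs_div, abs_of_pos (hr n)]
      have h5 : |dist y (a n) - dist x (a n)| / r n ≤ dist x y / r n := by
        gcongr
        exact (hr n).le
      have h6 := abs_sub_abs_le_abs_sub (max (1 - dist x (a n) / r n) 0)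
        (max (1 - dist y (a n) / r n) 0)
      rw [max_comm 0 (1 - dist x (a n) / r n), max_comm 0 (1 - dist y (a n) / r n)]
      calc max (1 - dist x (a n) / r n) 0 - max (1 - dist y (a n) / r n) 0
          ≤ |max (1 - dist x (a n) / r n) 0 - max (1 - dist y (a n) / r n) 0| :=
            le_abs_self _
        _ ≤ |(1 - dist x (a n) / r n) - (1 - dist y (a n) / r n)| := h1
        _ = |dist y (a n) - dist x (a n)| / r n := by rw [h2, h3]
        _ ≤ dist x y / r n := h5
    have hc1 : c n * (max 0 (1 - dist x (a n) / r n) - max 0 (1 - dist y (a n) / r n))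
        ≤ c n * (dist x y / r n) := mul_le_mul_of_nonneg_left key (hc n).1
    have hc2 : c n * (dist x y / r n) ≤ 4 * r n * (dist x y / r n) :=
      mul_le_mul_of_nonneg_right (hc n).2 (div_nonneg dist_nonneg (hr n).le)
    have hc3 : 4 * r n * (dist x y / r n) = 4 * dist x y := by
      field_simp [(hr n).ne']
    have heq : f n x - f n y
        = c n * (max 0 (1 - dist x (a n) / r n) - max 0 (1 - dist y (a n) / r n)) := by
      rw [hf]; ring
    linarith
  have hg_ge : ∀ (x : X) (n : ℕ), f n x ≤ ∑' k, f k x := by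
    intro x n
    rcases eq_or_ne (f n x) 0 with h | h
    · rw [h]; exact tsum_nonneg fun k => hnonneg k x
    · have : ∑' k, f k x = f n x :=
        tsum_eq_single n fun m hm => by
          by_contra h'
          exact hm (hss x h' h)
      rw [this]
  have htsum : ∀ x : X, (∑' k, f k x) = 0 ∨ ∃ n, (∑' k, f k x) = f n x := by
    intro x
    by_cases h : ∀ n, f n x = 0
    · left
      calc ∑' k, f k x = ∑' _ : ℕ, (0:ℝ) := tsum_congr h
        _ = 0 := tsum_zero
    · push_neg at h
      obtain ⟨n, hn⟩ := h
      right
      exact ⟨n, tsum_eq_single n fun m hm => by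
        by_contra h'
        exact hm (hss x h' hn)⟩
  have hone : ∀ x y : X, (∑' k, f k x) - (∑' k, f k y) ≤ 4 * dist x y := by
    intro x y
    rcases htsum x with h | ⟨n, hgx⟩
    · rw [h]
      have h1 : 0 ≤ ∑' k, f k y := tsum_nonneg fun k => hnonneg k y
      have h2 : (0:ℝ) ≤ 4 * dist x y := mul_nonneg (by norm_num) dist_nonneg
      linarith
    · rw [hgx]
      have h1 := hg_ge y n
      have h2 := hlip n x y
      linarith
  refine ⟨hss, ?_, ?_, ?_⟩
  · intro x y
    rw [abs_sub_le_iff]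
    refine ⟨hone x y, ?_⟩
    have := hone y x
    rw [dist_comm y x] at this
    exact this
  · intro m
    have h1 : ∑' n, f n (a m) = f m (a m) := by
      refine tsum_eq_single m fun n hn => ?_
      apply hzero
      intro hmem'
      exact Set.disjoint_left.1 (hdisj hn) hmem' (Metric.mem_ball_self (hr m))
    rw [h1, hf]
    simp [dist_self, (hr m).ne']
  · intro x hx
    have h : ∀ n, f n x = 0 := by
      intro n
      apply hzero
      intro h'
      exact hx (Set.mem_iUnion.2 ⟨n, h'⟩)
    calc ∑' n, f n x = ∑' _ : ℕ, (0:ℝ) := tsum_congr h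
      _ = 0 := tsum_zero
end

section
/- Let X be a pointed compact metric space and φ : X → X a base point-preserving continuous map that is not supercontractive. Then there exists f ∈ Lip₀(X) such that f ∘ φ ∉ lip₀(X). -/
open Filter

/-- Core construction: given two sequences converging to the same point with
positive mutual distances, there is a 1-Lipschitz function separating them
frequently at scale comparable to their distance. -/
theorem supercontr_core {X : Type*} [MetricSpace X] (u v : ℕ → X) (p : X)
    (ht : ∀ n, 0 < dist (u n) (v n))
    (hu : Tendsto u atTop (nhds p))
    (hv : Tendsto v atTop (nhds p)) :
    ∃ f : X → ℝ, LipschitzWith 1 f ∧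
      ∀ N : ℕ, ∃ n, N ≤ n ∧ dist (u n) (v n) / 8 ≤ |f (u n) - f (v n)| := by
  classical
  set t : ℕ → ℝ := fun n => dist (u n) (v n) with ht_def
  -- key extraction step
  have hkey : ∀ M : ℕ, ∃ N, M < N ∧ t N ≤ t M / 8 ∧ dist (u N) p ≤ t M / 8 ∧
      dist (v N) p ≤ t M / 8 := by
    intro M
    have hb : (0:ℝ) < t M / 16 := by have := ht M; positivity
    obtain ⟨N₁, hN₁⟩ := (Metric.tendsto_atTop.mp hu) (t M / 16) hb
    obtain ⟨N₂, hN₂⟩ := (Metric.tendsto_atTop.mp hv) (t M / 16) hb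
    refine ⟨max (M+1) (max N₁ N₂), ?_, ?_, ?_, ?_⟩
    · exact lt_of_lt_of_le (Nat.lt_succ_self M) (le_max_left _ _)
    · have h1 := hN₁ _ (le_trans (le_max_left N₁ N₂) (le_max_right (M+1) _))
      have h2 := hN₂ _ (le_trans (le_max_right N₁ N₂) (le_max_right (M+1) _))
      have h3 := dist_triangle (u (max (M+1) (max N₁ N₂))) p (v (max (M+1) (max N₁ N₂)))
      have h4 := dist_comm p (v (max (M+1) (max N₁ N₂)))
      simp only [ht_def]
      linarith
    · have h1 := hN₁ _ (le_trans (le_max_left N₁ N₂) (le_max_right (M+1) _))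
      linarith
    · have h2 := hN₂ _ (le_trans (le_max_right N₁ N₂) (le_max_right (M+1) _))
      linarith
  -- recursive subsequence
  obtain ⟨m, hmspec⟩ : ∃ m : ℕ → ℕ, ∀ j, m j < m (j+1) ∧ t (m (j+1)) ≤ t (m j)/8 ∧
      dist (u (m (j+1))) p ≤ t (m j)/8 ∧ dist (v (m (j+1))) p ≤ t (m j)/8 := by
    refine ⟨fun j => Nat.rec 0 (fun _ mj => (hkey mj).choose) j, fun j => ?_⟩
    exact (hkey _).choose_spec
  have hmono : StrictMono m := strictMono_nat_of_lt_succ fun j => (hmspec j).1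
  have hs0 : ∀ j, 0 < t (m j) := fun j => ht (m j)
  have hanti : Antitone (fun j => t (m j)) := by
    apply antitone_nat_of_succ_le
    intro j
    have := (hmspec j).2.1
    have := hs0 j
    linarith
  have hs8 : ∀ j k, j < k → t (m k) ≤ t (m j) / 8 := by
    intro j k hjk
    exact le_trans (hanti (Nat.succ_le_of_lt hjk)) (hmspec j).2.1
  -- pick the farther of u,v from p
  obtain ⟨W, Z, hWZd, hWp, hZp1, hWp1, hWZuv⟩ :
      ∃ W Z : ℕ → X, (∀ j, dist (W j) (Z j) = t (m j)) ∧
        (∀ j, t (m j) ≤ 2 * dist (W j) p) ∧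
        (∀ j, dist (Z (j+1)) p ≤ t (m j)/8) ∧
        (∀ j, dist (W (j+1)) p ≤ t (m j)/8) ∧
        (∀ j, (W j = u (m j) ∧ Z j = v (m j)) ∨ (W j = v (m j) ∧ Z j = u (m j))) := by
    refine ⟨fun j => if dist (v (m j)) p ≤ dist (u (m j)) p then u (m j) else v (m j),
           fun j => if dist (v (m j)) p ≤ dist (u (m j)) p then v (m j) else u (m j),
           fun j => ?_, fun j => ?_, fun j => ?_, fun j => ?_, fun j => ?_⟩
    · dsimp only
      by_cases hc : dist (v (m j)) p ≤ dist (u (m j)) p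
      · rw [if_pos hc, if_pos hc]
      · rw [if_neg hc, if_neg hc]; exact dist_comm _ _
    · have h3 := dist_triangle (u (m j)) p (v (m j))
      have h4 := dist_comm p (v (m j))
      by_cases hc : dist (v (m j)) p ≤ dist (u (m j)) p <;>
        simp only [hc, if_pos, if_neg, if_true, if_false, ht_def] <;>
      · linarith
    · have h1 := (hmspec j).2.2.1
      have h2 := (hmspec j).2.2.2
      by_cases hc : dist (v (m (j+1))) p ≤ dist (u (m (j+1))) p <;> simp [hc] <;> linarith
    · have h1 := (hmspec j).2.2.1
      have h2 := (hmspec j).2.2.2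
      by_cases hc : dist (v (m (j+1))) p ≤ dist (u (m (j+1))) p <;> simp [hc] <;> linarith
    · by_cases hc : dist (v (m j)) p ≤ dist (u (m j)) p <;> simp [hc]
  -- the function
  set f : X → ℝ := fun x => ⨆ j, max 0 (t (m j)/4 - dist x (W j)) with hf_def
  have hbdd : ∀ x : X, BddAbove (Set.range fun j => max 0 (t (m j)/4 - dist x (W j))) := by
    intro x
    refine ⟨t (m 0)/4, ?_⟩
    rintro r ⟨j, rfl⟩
    have h1 : t (m j) ≤ t (m 0) := hanti (Nat.zero_le j)
    have h2 : (0:ℝ) ≤ dist x (W j) := dist_nonneg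
    have := hs0 0
    apply max_le <;> linarith
  have hle : ∀ x j, max 0 (t (m j)/4 - dist x (W j)) ≤ f x := by
    intro x j
    exact le_ciSup (hbdd x) j
  have hflip : ∀ x y : X, f x ≤ f y + dist x y := by
    intro x y
    refine ciSup_le fun j => ?_
    have htri : dist y (W j) ≤ dist y x + dist x (W j) := dist_triangle _ _ _
    have h1 : max 0 (t (m j)/4 - dist x (W j)) ≤ max 0 (t (m j)/4 - dist y (W j)) + dist x y := by
      have hd : (0:ℝ) ≤ dist x y := dist_nonneg
      have hcomm : dist y x = dist x y := dist_comm _ _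
      apply max_le
      · have : (0:ℝ) ≤ max 0 (t (m j)/4 - dist y (W j)) := le_max_left _ _
        linarith
      · have : t (m j)/4 - dist y (W j) ≤ max 0 (t (m j)/4 - dist y (W j)) := le_max_right _ _
        linarith
    exact h1.trans (add_le_add_left (hle y j) _)
  have hlip : LipschitzWith 1 f := by
    apply LipschitzWith.of_dist_le_mul
    intro x y
    rw [Real.dist_eq, NNReal.coe_one, one_mul]
    have h1 := hflip x y
    have h2 := hflip y x
    rw [dist_comm y x] at h2
    rw [abs_sub_le_iff]
    constructor <;> linarith
  -- value at W
  have hfW : ∀ j, t (m j)/4 ≤ f (W j) := by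
    intro j
    have := hle (W j) j
    rw [dist_self] at this
    have h0 : (0:ℝ) < t (m j) := hs0 j
    have : max 0 (t (m j)/4 - 0) = t (m j)/4 := by
      rw [sub_zero]; exact max_eq_right (by linarith)
    calc t (m j)/4 = max 0 (t (m j)/4 - dist (W j) (W j)) := by
          rw [dist_self, sub_zero, max_eq_right (by linarith)]
      _ ≤ f (W j) := hle (W j) j
  -- value at Z (j+1)
  have hfZ : ∀ k, f (Z (k+1)) ≤ t (m (k+1)) / 32 := by
    intro k
    refine ciSup_le fun i => ?_
    have hsk1 : (0:ℝ) < t (m (k+1)) := hs0 (k+1)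
    apply max_le
    · positivity
    · rcases lt_trichotomy i (k+1) with hik | hik | hik
      · -- i ≤ k : bump is nonpositive
        have hik' : i ≤ k := Nat.lt_succ_iff.mp hik
        have h1 : t (m i) ≤ 2 * dist (W i) p := hWp i
        have h2 : dist (Z (k+1)) p ≤ t (m k)/8 := hZp1 k
        have h3 : t (m k) ≤ t (m i) := hanti hik'
        have h4 : dist (W i) p ≤ dist (W i) (Z (k+1)) + dist (Z (k+1)) p :=
          dist_triangle _ _ _
        have h5 : dist (W i) (Z (k+1)) = dist (Z (k+1)) (W i) := dist_comm _ _
        have h6 := hs0 i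
        linarith
      · subst hik
        have h1 : dist (Z (k+1)) (W (k+1)) = t (m (k+1)) := by
          rw [dist_comm]; exact hWZd (k+1)
        linarith
      · -- i > k+1
        have h1 : t (m i) ≤ t (m (k+1))/8 := hs8 (k+1) i hik
        have h2 : (0:ℝ) ≤ dist (Z (k+1)) (W i) := dist_nonneg
        linarith
  refine ⟨f, hlip, fun N => ?_⟩
  refine ⟨m (N+1), le_trans (Nat.le_succ N) (hmono.le_apply), ?_⟩
  have hW := hfW (N+1)
  have hZ := hfZ N
  have hs := hs0 (N+1)
  have hdiff : t (m (N+1)) / 8 ≤ |f (W (N+1)) - f (Z (N+1))| := by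
    have : t (m (N+1)) / 8 ≤ f (W (N+1)) - f (Z (N+1)) := by linarith
    exact this.trans (le_abs_self _)
  rcases hWZuv (N+1) with ⟨h1, h2⟩ | ⟨h1, h2⟩
  · rw [← h1, ← h2]
    calc dist (W (N+1)) (Z (N+1)) / 8 = t (m (N+1)) / 8 := by rw [hWZd]
      _ ≤ _ := hdiff
  · rw [← h2, ← h1]
    rw [dist_comm (Z (N+1)) (W (N+1)), abs_sub_comm]
    calc dist (W (N+1)) (Z (N+1)) / 8 = t (m (N+1)) / 8 := by rw [hWZd]
      _ ≤ _ := hdiff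


/-- If `φ` is a base point-preserving continuous self-map of a pointed compact metric space
(base point `e`) which is not supercontractive, then there is `f ∈ Lip₀(X)` with
`f ∘ φ ∉ lip₀(X)`. -/
theorem exists_lip0_comp_not_little {X : Type*} [MetricSpace X] [CompactSpace X] (e : X)
    (φ : X → X) (hφ : Continuous φ) (hb : φ e = e) (h : ¬ IsSupercontractive φ) :
    ∃ f : X → ℝ, (∃ K, LipschitzWith K f) ∧ f e = 0 ∧
      f ∘ φ ∉ {g : X → ℝ | (∃ K, LipschitzWith K g) ∧ IsSupercontractive g ∧ g e = 0} := by
  classical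
  simp only [IsSupercontractive] at h
  push_neg at h
  obtain ⟨ε, hε, hA⟩ := h
  have hpair : ∀ n : ℕ, ∃ x y : X, 0 < dist x y ∧ dist x y < 1/(n+1) ∧
      ε ≤ dist (φ x) (φ y) / dist x y := by
    intro n
    obtain ⟨x, y, h1, h2, h3⟩ := hA (1/(n+1)) (by positivity)
    exact ⟨x, y, h1, h2, h3⟩
  choose x y hd0 hdlt hrat using hpair
  -- extract a convergent subsequence of x
  obtain ⟨q, -, σ, hσ, hxq⟩ := isCompact_univ.tendsto_subseq
    (x := x) (fun n => Set.mem_univ _)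
  -- y ∘ σ also tends to q
  have hyq : Filter.Tendsto (fun n => y (σ n)) Filter.atTop (nhds q) := by
    rw [tendsto_iff_dist_tendsto_zero]
    have hxq0 : Filter.Tendsto (fun n => dist (x (σ n)) q) Filter.atTop (nhds 0) :=
      tendsto_iff_dist_tendsto_zero.mp hxq
    have hd : Filter.Tendsto (fun n => dist (y (σ n)) (x (σ n))) Filter.atTop (nhds 0) := by
      apply squeeze_zero (fun n => dist_nonneg) (g := fun n : ℕ => 1/(n+1))
      · intro n
        have h1 : dist (y (σ n)) (x (σ n)) = dist (x (σ n)) (y (σ n)) := dist_comm _ _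
        have h2 := hdlt (σ n)
        have h3 : (1:ℝ)/(σ n + 1) ≤ 1/(n+1) := by
          apply one_div_le_one_div_of_le (by positivity)
          have := hσ.le_apply (x := n)
          push_cast
          linarith [(Nat.cast_le (α := ℝ)).mpr this]
        linarith
      · exact tendsto_one_div_add_atTop_nhds_zero_nat
    have := hd.add hxq0
    rw [add_zero] at this
    apply squeeze_zero (fun n => dist_nonneg) (fun n => dist_triangle (y (σ n)) (x (σ n)) q) this
  -- images converge to p := φ q
  have hup : Filter.Tendsto (fun n => φ (x (σ n))) Filter.atTop (nhds (φ q)) :=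
    (hφ.tendsto q).comp hxq
  have hvp : Filter.Tendsto (fun n => φ (y (σ n))) Filter.atTop (nhds (φ q)) :=
    (hφ.tendsto q).comp hyq
  have htpos : ∀ n, 0 < dist (φ (x (σ n))) (φ (y (σ n))) := by
    intro n
    have h1 := hrat (σ n)
    have h2 := hd0 (σ n)
    have h3 : ε * dist (x (σ n)) (y (σ n)) ≤ dist (φ (x (σ n))) (φ (y (σ n))) :=
      (le_div_iff₀ h2).mp h1
    nlinarith
  obtain ⟨f₀, hlip, hsep⟩ := supercontr_core (fun n => φ (x (σ n))) (fun n => φ (y (σ n)))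
    (φ q) htpos hup hvp
  refine ⟨fun z => f₀ z - f₀ e, ⟨1, ?_⟩, by simp, ?_⟩
  · apply LipschitzWith.of_dist_le_mul
    intro a b
    have h1 : dist (f₀ a - f₀ e) (f₀ b - f₀ e) = dist (f₀ a) (f₀ b) := by
      rw [Real.dist_eq, Real.dist_eq]; ring_nf
    rw [h1]
    exact hlip.dist_le_mul a b
  · rintro ⟨-, hsc, -⟩
    obtain ⟨δ, hδ, hcon⟩ := hsc (ε/8) (by positivity)
    -- pick n large with 1/(n+1) < δ
    obtain ⟨N, hN⟩ := exists_nat_gt (1/δ)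
    obtain ⟨n, hnN, hnsep⟩ := hsep N
    have hds : dist (x (σ n)) (y (σ n)) < δ := by
      have h1 := hdlt (σ n)
      have h2 : (1:ℝ)/(σ n + 1) < δ := by
        rw [div_lt_iff₀ (by positivity)]
        have h3 : (1:ℝ)/δ < N := hN
        have h4 : (N:ℝ) ≤ σ n := by
          have := le_trans hnN (hσ.le_apply (x := n))
          exact_mod_cast this
        rw [div_lt_iff₀ hδ] at h3
        nlinarith
      linarith
    have hcc := hcon (x (σ n)) (y (σ n)) (hd0 (σ n)) hds
    -- lower bound for the ratio
    have h1 := hrat (σ n)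
    have hdpos := hd0 (σ n)
    have h3 : ε * dist (x (σ n)) (y (σ n)) ≤ dist (φ (x (σ n))) (φ (y (σ n))) :=
      (le_div_iff₀ hdpos).mp h1
    have h4 : dist (((fun z => f₀ z - f₀ e) ∘ φ) (x (σ n))) (((fun z => f₀ z - f₀ e) ∘ φ) (y (σ n)))
        = |f₀ (φ (x (σ n))) - f₀ (φ (y (σ n)))| := by
      simp only [Function.comp_apply, Real.dist_eq]
      ring_nf
    rw [h4] at hcc
    have h5 : dist (φ (x (σ n))) (φ (y (σ n))) / 8 ≤ |f₀ (φ (x (σ n))) - f₀ (φ (y (σ n)))| :=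
      hnsep
    rw [div_lt_iff₀ hdpos] at hcc
    nlinarith
end
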